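/- arXiv:1804.02416 — 4 statements merged into one kernel-verified Lean document; each statement's English description precedes it below -/
import Mathlib

section
/- Let r ≥ 2 be an integer, and for x ∈ ℂ set q^x := exp(iπx/r) and {x} := q^x − q^{−x}. Then for every α ∈ ℂ with α ∉ ℤ one has ∏_{k=1}^{r−1} {k}/{α+r−k} = r·{α}/{rα}. -/
open Complex Finset Polynomial

/-- `{x} := q^x - q^{-x}` where `q^x := exp(iπx/r)`. -/
noncomputable def qbr (r : ℕ) (x : ℂ) : ℂ :=
  Complex.exp (Real.pi * Complex.I * x / r) - Complex.exp (-(Real.pi * Complex.I * x / r))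

noncomputable def qe (r : ℕ) (x : ℂ) : ℂ := Complex.exp (Real.pi * Complex.I * x / r)

lemma qe_ne_zero (r : ℕ) (x : ℂ) : qe r x ≠ 0 := Complex.exp_ne_zero _

lemma qe_add (r : ℕ) (x y : ℂ) : qe r x * qe r y = qe r (x + y) := by
  rw [qe, qe, qe, ← Complex.exp_add]; ring_nf

lemma qe_pow (r : ℕ) (x : ℂ) (n : ℕ) : qe r x ^ n = qe r (n * x) := by
  rw [qe, qe, ← Complex.exp_nat_mul]; ring_nf

lemma qe_neg (r : ℕ) (x : ℂ) : qe r (-x) = (qe r x)⁻¹ := by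
  rw [qe, qe, ← Complex.exp_neg]; ring_nf

lemma qe_zero (r : ℕ) : qe r 0 = 1 := by simp [qe]

lemma qe_eq_one_iff (r : ℕ) (hr : r ≠ 0) (x : ℂ) :
    qe r x = 1 ↔ ∃ n : ℤ, x = 2 * r * n := by
  rw [qe, Complex.exp_eq_one_iff]
  have hrc : (r : ℂ) ≠ 0 := Nat.cast_ne_zero.mpr hr
  have hpi : (Real.pi : ℂ) ≠ 0 := by exact_mod_cast Real.pi_ne_zero
  constructor
  · rintro ⟨n, hn⟩
    refine ⟨n, mul_left_cancel₀ (mul_ne_zero hpi Complex.I_ne_zero) ?_⟩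
    field_simp at hn
    rw [hn]; ring
  · rintro ⟨n, hn⟩
    exact ⟨n, by rw [hn]; field_simp⟩

lemma qe_ne_one (r : ℕ) (hr : r ≠ 0) (x : ℂ) (h : ∀ n : ℤ, x ≠ 2 * r * n) :
    qe r x ≠ 1 := by
  intro hx
  obtain ⟨n, hn⟩ := (qe_eq_one_iff r hr x).mp hx
  exact h n hn

lemma qe_eq_qe_iff (r : ℕ) (hr : r ≠ 0) (x y : ℂ) :
    qe r x = qe r y ↔ qe r (x - y) = 1 := by
  constructor
  · intro h
    refine mul_right_cancel₀ (qe_ne_zero r y) ?_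
    rw [qe_add, sub_add_cancel, one_mul, h]
  · intro h
    have h2 := qe_add r (x - y) y
    rw [sub_add_cancel, h, one_mul] at h2
    exact h2.symm

lemma qbr_eq (r : ℕ) (x : ℂ) : qbr r x = qe r x - qe r (-x) := by
  unfold qbr qe; ring_nf

lemma qe_r (r : ℕ) (hr : r ≠ 0) : qe r r = -1 := by
  have hrc : (r : ℂ) ≠ 0 := Nat.cast_ne_zero.mpr hr
  rw [qe, mul_div_assoc, div_self hrc, mul_one, Complex.exp_pi_mul_I]

lemma qe_prim (r : ℕ) (hr : r ≠ 0) : IsPrimitiveRoot (qe r 2) r := by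
  have : qe r 2 = Complex.exp (2 * Real.pi * Complex.I / r) := by
    rw [qe]; ring_nf
  rw [this]
  exact Complex.isPrimitiveRoot_exp r hr

lemma prod_sub_pow_eq_geom (r : ℕ) (hr : 2 ≤ r) {ζ : ℂ} (hζ : IsPrimitiveRoot ζ r) (z : ℂ) :
    ∏ i ∈ Finset.Icc 1 (r - 1), (z - ζ ^ i) = ∑ i ∈ Finset.range r, z ^ i := by
  have hr0 : 0 < r := by omega
  have h0 : (X ^ r - 1 : ℂ[X]) = ∏ i ∈ Finset.range r, (X - C (ζ ^ i)) := by
    simpa using X_pow_sub_C_eq_prod hζ hr0 (one_pow r)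
  have hins : Finset.range r = insert 0 (Finset.Icc 1 (r - 1)) := by
    ext i; simp only [Finset.mem_range, Finset.mem_insert, Finset.mem_Icc]; omega
  have hnot : (0 : ℕ) ∉ Finset.Icc 1 (r - 1) := by simp
  have hpoly : (∏ i ∈ Finset.Icc 1 (r - 1), (X - C (ζ ^ i)) : ℂ[X])
      = ∑ i ∈ Finset.range r, X ^ i := by
    have h1 : ((X : ℂ[X]) - 1) * ∏ i ∈ Finset.Icc 1 (r - 1), (X - C (ζ ^ i))
        = (X - 1) * ∑ i ∈ Finset.range r, X ^ i := by
      rw [mul_geom_sum, h0, hins, Finset.prod_insert hnot, pow_zero, map_one]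
    have hX1 : ((X : ℂ[X]) - 1) ≠ 0 := by
      have := Polynomial.X_sub_C_ne_zero (1 : ℂ)
      simpa using this
    exact mul_left_cancel₀ hX1 h1
  have := congrArg (Polynomial.eval z) hpoly
  simpa [Polynomial.eval_prod, Polynomial.eval_finset_sum] using this

theorem prod_qbr_div_qbr (r : ℕ) (hr : 2 ≤ r) (α : ℂ) (hα : ∀ n : ℤ, α ≠ (n : ℂ)) :
    ∏ k ∈ Finset.Icc 1 (r - 1), qbr r (k : ℂ) / qbr r (α + r - k)
      = (r : ℂ) * qbr r α / qbr r (r * α) := by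
  have hr0 : r ≠ 0 := by omega
  have hrc : (r : ℂ) ≠ 0 := Nat.cast_ne_zero.mpr hr0
  set ζ := qe r 2 with hζdef
  set z := qe r (2 * α) with hzdef
  -- z ≠ 1
  have hz1 : z ≠ 1 := by
    apply qe_ne_one r hr0
    intro n h
    apply hα (r * n)
    push_cast
    have h2 : (2 : ℂ) * α = 2 * ((r : ℂ) * n) := by linear_combination h
    exact mul_left_cancel₀ two_ne_zero h2
  -- z ^ r ≠ 1
  have hzr : z ^ r = qe r (r * (2 * α)) := qe_pow r (2 * α) r
  have hzr1 : z ^ r - 1 ≠ 0 := by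
    rw [hzr, sub_ne_zero]
    apply qe_ne_one r hr0
    intro n h
    apply hα n
    have h2 : (2 * (r : ℂ)) * α = (2 * r) * n := by linear_combination h
    exact mul_left_cancel₀ (by simp [hrc] : (2 * (r:ℂ)) ≠ 0) h2
  have hζk : ∀ k : ℕ, ζ ^ k = qe r (2 * k) := by
    intro k
    rw [hζdef, qe_pow]
    ring_nf
  -- denominators nonzero
  have hζz : ∀ k : ℕ, ζ ^ k - z ≠ 0 := by
    intro k h
    rw [sub_eq_zero, hζk k, hzdef, qe_eq_qe_iff r hr0] at h
    obtain ⟨n, hn⟩ := (qe_eq_one_iff r hr0 _).mp h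
    apply hα (k - r * n)
    push_cast
    have h2 : (2:ℂ) * α = 2 * ((k : ℂ) - r * n) := by linear_combination -hn
    linear_combination (mul_left_cancel₀ (two_ne_zero (α := ℂ)) h2)
  -- per-term rewrite
  have hterm : ∀ k ∈ Finset.Icc 1 (r - 1),
      qbr r (k : ℂ) / qbr r (α + r - k) = qe r α * ((ζ ^ k - 1) / (ζ ^ k - z)) := by
    intro k _
    have h1 : qbr r (k : ℂ) = qe r (-(k : ℂ)) * (ζ ^ k - 1) := by
      rw [qbr_eq, hζk k, mul_sub, mul_one, qe_add]
      ring_nf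
    have hx : qe r (α + r - k) = - qe r (α - k) := by
      rw [show α + (r : ℂ) - k = (α - k) + r by ring, ← qe_add, qe_r r hr0]
      ring
    have hy : qe r (-(α + r - k)) = - qe r ((k : ℂ) - α) := by
      rw [show -(α + (r : ℂ) - k) = ((k : ℂ) - α) + -(r : ℂ) by ring, ← qe_add,
        qe_neg, qe_r r hr0]
      ring
    have h2 : qbr r (α + r - k) = qe r (-(k : ℂ) - α) * (ζ ^ k - z) := by
      rw [qbr_eq, hx, hy, hζk k, hzdef, mul_sub, qe_add, qe_add]
      ring_nf
    rw [h1, h2]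
    have hq : qe r (-(k : ℂ)) = qe r α * qe r (-(k : ℂ) - α) := by
      rw [qe_add]
      congr 1
      ring
    rw [hq, mul_assoc, mul_div_assoc, mul_div_mul_left _ _ (qe_ne_zero r (-(k : ℂ) - α))]
  rw [Finset.prod_congr rfl hterm, Finset.prod_mul_distrib, Finset.prod_const,
    Finset.prod_div_distrib, Nat.card_Icc]
  have hcard : r - 1 + 1 - 1 = r - 1 := by omega
  rw [hcard]
  set S : ℂ := ∑ i ∈ Finset.range r, z ^ i with hSdef
  have hgeom := prod_sub_pow_eq_geom r hr (qe_prim r hr0)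
  have hA : ∏ k ∈ Finset.Icc 1 (r - 1), (ζ ^ k - 1) = (-1 : ℂ) ^ (r - 1) * r := by
    calc ∏ k ∈ Finset.Icc 1 (r - 1), (ζ ^ k - 1)
        = ∏ k ∈ Finset.Icc 1 (r - 1), (-1 : ℂ) * ((1 : ℂ) - ζ ^ k) := by
          apply Finset.prod_congr rfl; intros; ring
      _ = (-1 : ℂ) ^ (r - 1) * ∏ k ∈ Finset.Icc 1 (r - 1), ((1 : ℂ) - ζ ^ k) := by
          rw [Finset.prod_mul_distrib, Finset.prod_const, Nat.card_Icc, hcard]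
      _ = (-1 : ℂ) ^ (r - 1) * r := by rw [hgeom 1]; simp
  have hB : ∏ k ∈ Finset.Icc 1 (r - 1), (ζ ^ k - z) = (-1 : ℂ) ^ (r - 1) * S := by
    calc ∏ k ∈ Finset.Icc 1 (r - 1), (ζ ^ k - z)
        = ∏ k ∈ Finset.Icc 1 (r - 1), (-1 : ℂ) * (z - ζ ^ k) := by
          apply Finset.prod_congr rfl; intros; ring
      _ = (-1 : ℂ) ^ (r - 1) * ∏ k ∈ Finset.Icc 1 (r - 1), (z - ζ ^ k) := by
          rw [Finset.prod_mul_distrib, Finset.prod_const, Nat.card_Icc, hcard]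
      _ = (-1 : ℂ) ^ (r - 1) * S := by rw [hgeom z]
  rw [hA, hB, mul_div_mul_left _ _ (pow_ne_zero _ (neg_ne_zero.mpr one_ne_zero) : ((-1 : ℂ) ^ (r-1)) ≠ 0)]
  have hA1 : qbr r α = qe r (-α) * (z - 1) := by
    rw [qbr_eq, hzdef, mul_sub, mul_one, qe_add]
    ring_nf
  have hA2 : qbr r ((r : ℂ) * α) = qe r (-((r : ℂ) * α)) * (z ^ r - 1) := by
    rw [qbr_eq, hzr, mul_sub, mul_one, qe_add]
    ring_nf
  have hgs : S * (z - 1) = z ^ r - 1 := geom_sum_mul z r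
  have hSne : S ≠ 0 := by
    intro h
    rw [h, zero_mul] at hgs
    exact hzr1 hgs.symm
  have hz1' : z - 1 ≠ 0 := sub_ne_zero.mpr hz1
  have hpow : qe r α ^ (r - 1) * qe r (-((r : ℂ) * α)) = qe r (-α) := by
    rw [qe_pow, qe_add]
    congr 1
    have : ((r - 1 : ℕ) : ℂ) = (r : ℂ) - 1 := by
      push_cast [Nat.cast_sub (by omega : 1 ≤ r)]
      ring
    rw [this]
    ring
  rw [hA1, hA2, ← hgs]
  rw [mul_div_assoc', div_eq_div_iff hSne
    (mul_ne_zero (qe_ne_zero r (-((r : ℂ) * α))) (mul_ne_zero hSne hz1'))]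
  linear_combination ((r : ℂ) * S * (z - 1)) * hpow
end

section
/- Let r ≥ 2 be an integer and q = exp(iπ/r) ∈ ℂ. Let U_q(sl2) be the ℂ-algebra with generators E, F, K, K⁻¹ and relations KK⁻¹ = K⁻¹K = 1, KEK⁻¹ = q²E, KFK⁻¹ = q⁻²F, EF − FE = (K − K⁻¹)/(q − q⁻¹), and let Ω := FE + (qK + q⁻¹K⁻¹)/(q − q⁻¹)² be its Casimir element. Then for every natural number k one has ∏_{i=0}^{k−1} (Ω − (q^{−2i−1}K + q^{2i+1}K⁻¹)/(q − q⁻¹)²) = E^k F^k in U_q(sl2). -/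
/-- Generators of the quantum group `U_q(sl2)`. -/
inductive SL2Gen : Type
  | E | F | K | Kinv

open FreeAlgebra in
/-- Defining relations of `U_q(sl2)` for a parameter `q : ℂ`. -/
inductive SL2Rel (q : ℂ) : FreeAlgebra ℂ SL2Gen → FreeAlgebra ℂ SL2Gen → Prop
  | K_Kinv : SL2Rel q (ι ℂ SL2Gen.K * ι ℂ SL2Gen.Kinv) 1
  | Kinv_K : SL2Rel q (ι ℂ SL2Gen.Kinv * ι ℂ SL2Gen.K) 1
  | K_E : SL2Rel q (ι ℂ SL2Gen.K * ι ℂ SL2Gen.E * ι ℂ SL2Gen.Kinv) (q ^ 2 • ι ℂ SL2Gen.E)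
  | K_F : SL2Rel q (ι ℂ SL2Gen.K * ι ℂ SL2Gen.F * ι ℂ SL2Gen.Kinv) ((q ^ 2)⁻¹ • ι ℂ SL2Gen.F)
  | E_F : SL2Rel q (ι ℂ SL2Gen.E * ι ℂ SL2Gen.F - ι ℂ SL2Gen.F * ι ℂ SL2Gen.E)
      ((q - q⁻¹)⁻¹ • (ι ℂ SL2Gen.K - ι ℂ SL2Gen.Kinv))

/-- `U_q(sl2)`: quotient of the free algebra by the defining relations. -/
abbrev Uq (q : ℂ) : Type := RingQuot (SL2Rel q)

namespace Uq

variable (q : ℂ)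

noncomputable def E : Uq q := RingQuot.mkAlgHom ℂ (SL2Rel q) (FreeAlgebra.ι ℂ SL2Gen.E)
noncomputable def F : Uq q := RingQuot.mkAlgHom ℂ (SL2Rel q) (FreeAlgebra.ι ℂ SL2Gen.F)
noncomputable def K : Uq q := RingQuot.mkAlgHom ℂ (SL2Rel q) (FreeAlgebra.ι ℂ SL2Gen.K)
noncomputable def Kinv : Uq q := RingQuot.mkAlgHom ℂ (SL2Rel q) (FreeAlgebra.ι ℂ SL2Gen.Kinv)

/-- The Casimir element `Ω = FE + (qK + q⁻¹K⁻¹)/(q - q⁻¹)²`. -/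
noncomputable def Ω : Uq q :=
  F q * E q + ((q - q⁻¹) ^ 2)⁻¹ • (q • K q + q⁻¹ • Kinv q)

end Uq

namespace UqAux

open Uq

variable {q : ℂ}

lemma rel_eq {a b : FreeAlgebra ℂ SL2Gen} (h : SL2Rel q a b) :
    RingQuot.mkAlgHom ℂ (SL2Rel q) a = RingQuot.mkAlgHom ℂ (SL2Rel q) b :=
  RingQuot.mkAlgHom_rel ℂ h

lemma K_Kinv : K q * Kinv q = 1 := by
  simpa [K, Kinv, map_mul, map_one] using rel_eq (q := q) SL2Rel.K_Kinv

lemma Kinv_K : Kinv q * K q = 1 := by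
  simpa [K, Kinv, map_mul, map_one] using rel_eq (q := q) SL2Rel.Kinv_K

lemma K_E_Kinv : K q * E q * Kinv q = q ^ 2 • E q := by
  simpa [K, E, Kinv, map_mul, map_smul] using rel_eq (q := q) SL2Rel.K_E

lemma K_F_Kinv : K q * F q * Kinv q = (q ^ 2)⁻¹ • F q := by
  simpa [K, F, Kinv, map_mul, map_smul] using rel_eq (q := q) SL2Rel.K_F

lemma E_F : E q * F q - F q * E q = (q - q⁻¹)⁻¹ • (K q - Kinv q) := by
  simpa [K, E, F, Kinv, map_mul, map_sub, map_smul] using rel_eq (q := q) SL2Rel.E_F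

lemma K_mul_E : K q * E q = q ^ 2 • (E q * K q) := by
  have h := congrArg (· * K q) (K_E_Kinv (q := q))
  simpa [mul_assoc, Kinv_K, smul_mul_assoc] using h

lemma K_mul_F : K q * F q = (q ^ 2)⁻¹ • (F q * K q) := by
  have h := congrArg (· * K q) (K_F_Kinv (q := q))
  simpa [mul_assoc, Kinv_K, smul_mul_assoc] using h

lemma F_mul_K (hq0 : q ≠ 0) : F q * K q = q ^ 2 • (K q * F q) := by
  rw [K_mul_F, smul_smul, mul_inv_cancel₀ (pow_ne_zero 2 hq0), one_smul]

lemma F_mul_Kinv : F q * Kinv q = (q ^ 2)⁻¹ • (Kinv q * F q) := by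
  have h := congrArg (fun x => Kinv q * x * Kinv q) (K_mul_F (q := q))
  calc F q * Kinv q = Kinv q * (K q * F q) * Kinv q := by
        rw [← mul_assoc, Kinv_K, one_mul]
    _ = Kinv q * ((q ^ 2)⁻¹ • (F q * K q)) * Kinv q := h
    _ = (q ^ 2)⁻¹ • (Kinv q * F q) := by
        simp [mul_smul_comm, smul_mul_assoc, mul_assoc, K_Kinv]

lemma F_mul_E : F q * E q = E q * F q - (q - q⁻¹)⁻¹ • (K q - Kinv q) := by
  rw [← E_F]; abel

lemma Fpow_K (hq0 : q ≠ 0) (n : ℕ) :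
    F q ^ n * K q = (q ^ 2) ^ n • (K q * F q ^ n) := by
  induction n with
  | zero => simp
  | succ n ih =>
    rw [pow_succ, mul_assoc, F_mul_K hq0, mul_smul_comm, ← mul_assoc, ih,
      smul_mul_assoc, smul_smul, mul_assoc, ← pow_succ, ← pow_succ']

lemma Fpow_Kinv (n : ℕ) :
    F q ^ n * Kinv q = ((q ^ 2)⁻¹) ^ n • (Kinv q * F q ^ n) := by
  induction n with
  | zero => simp
  | succ n ih =>
    rw [pow_succ, mul_assoc, F_mul_Kinv, mul_smul_comm, ← mul_assoc, ih,
      smul_mul_assoc, smul_smul, mul_assoc, ← pow_succ, ← pow_succ']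

/-- The scalar factors appearing in the product. -/
noncomputable def c (q : ℂ) (i : ℕ) : Uq q :=
  ((q - q⁻¹) ^ 2)⁻¹ • ((q ^ (2 * i + 1))⁻¹ • K q + q ^ (2 * i + 1) • Kinv q)

lemma dd (hδ : q - q⁻¹ ≠ 0) : ((q - q⁻¹) ^ 2)⁻¹ * (q - q⁻¹) = (q - q⁻¹)⁻¹ := by
  rw [sq, mul_inv, mul_assoc, inv_mul_cancel₀ hδ, mul_one]

lemma coefK (hq0 : q ≠ 0) (hδ : q - q⁻¹ ≠ 0) (k : ℕ) :
    ((q - q⁻¹) ^ 2)⁻¹ * (q ^ (2 * k + 1))⁻¹ - ((q - q⁻¹) ^ 2)⁻¹ * (q ^ (2 * (k + 1) + 1))⁻¹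
      = (q - q⁻¹)⁻¹ * ((q ^ 2) ^ (k + 1))⁻¹ := by
  have hu : q ^ (2 * k + 1) ≠ 0 := pow_ne_zero _ hq0
  have e1 : q ^ (2 * (k + 1) + 1) = q ^ (2 * k + 1) * q ^ 2 := by ring
  have e2 : (q ^ 2) ^ (k + 1) = q ^ (2 * k + 1) * q := by ring
  have h : (q ^ (2 * k + 1))⁻¹ - (q ^ (2 * k + 1) * q ^ 2)⁻¹
      = (q ^ (2 * k + 1) * q)⁻¹ * (q - q⁻¹) := by field_simp
  calc ((q - q⁻¹) ^ 2)⁻¹ * (q ^ (2 * k + 1))⁻¹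
        - ((q - q⁻¹) ^ 2)⁻¹ * (q ^ (2 * (k + 1) + 1))⁻¹
      = ((q - q⁻¹) ^ 2)⁻¹ * ((q ^ (2 * k + 1))⁻¹ - (q ^ (2 * k + 1) * q ^ 2)⁻¹) := by
        rw [e1]; ring
    _ = (((q - q⁻¹) ^ 2)⁻¹ * (q - q⁻¹)) * (q ^ (2 * k + 1) * q)⁻¹ := by rw [h]; ring
    _ = (q - q⁻¹)⁻¹ * ((q ^ 2) ^ (k + 1))⁻¹ := by rw [dd hδ, e2]

lemma coefKinv (hq0 : q ≠ 0) (hδ : q - q⁻¹ ≠ 0) (k : ℕ) :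
    ((q - q⁻¹) ^ 2)⁻¹ * q ^ (2 * k + 1) - ((q - q⁻¹) ^ 2)⁻¹ * q ^ (2 * (k + 1) + 1)
      = -((q - q⁻¹)⁻¹ * (q ^ 2) ^ (k + 1)) := by
  have e1 : q ^ (2 * (k + 1) + 1) = q ^ (2 * k + 1) * q ^ 2 := by ring
  have e2 : (q ^ 2) ^ (k + 1) = q ^ (2 * k + 1) * q := by ring
  have h : q ^ (2 * k + 1) - q ^ (2 * k + 1) * q ^ 2
      = -((q ^ (2 * k + 1) * q) * (q - q⁻¹)) := by field_simp; ring
  calc ((q - q⁻¹) ^ 2)⁻¹ * q ^ (2 * k + 1) - ((q - q⁻¹) ^ 2)⁻¹ * q ^ (2 * (k + 1) + 1)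
      = ((q - q⁻¹) ^ 2)⁻¹ * (q ^ (2 * k + 1) - q ^ (2 * k + 1) * q ^ 2) := by
        rw [e1]; ring
    _ = -((((q - q⁻¹) ^ 2)⁻¹ * (q - q⁻¹)) * (q ^ (2 * k + 1) * q)) := by rw [h]; ring
    _ = -((q - q⁻¹)⁻¹ * (q ^ 2) ^ (k + 1)) := by rw [dd hδ, e2]

lemma c_sub_c (hq0 : q ≠ 0) (hδ : q - q⁻¹ ≠ 0) (k : ℕ) :
    c q k - c q (k + 1)
      = (q - q⁻¹)⁻¹ • (((q ^ 2) ^ (k + 1))⁻¹ • K q - (q ^ 2) ^ (k + 1) • Kinv q) := by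
  calc c q k - c q (k + 1)
      = (((q - q⁻¹) ^ 2)⁻¹ * (q ^ (2 * k + 1))⁻¹
            - ((q - q⁻¹) ^ 2)⁻¹ * (q ^ (2 * (k + 1) + 1))⁻¹) • K q
        + (((q - q⁻¹) ^ 2)⁻¹ * q ^ (2 * k + 1)
            - ((q - q⁻¹) ^ 2)⁻¹ * q ^ (2 * (k + 1) + 1)) • Kinv q := by
        unfold c
        module
    _ = ((q - q⁻¹)⁻¹ * ((q ^ 2) ^ (k + 1))⁻¹) • K q
        + (-((q - q⁻¹)⁻¹ * (q ^ 2) ^ (k + 1))) • Kinv q := by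
        rw [coefK hq0 hδ, coefKinv hq0 hδ]
    _ = (q - q⁻¹)⁻¹ • (((q ^ 2) ^ (k + 1))⁻¹ • K q - (q ^ 2) ^ (k + 1) • Kinv q) := by
        module

lemma key (hq0 : q ≠ 0) (hδ : q - q⁻¹ ≠ 0) (k : ℕ) :
    F q ^ k * (Ω q - c q k) = E q * F q ^ (k + 1) := by
  induction k with
  | zero =>
    rw [pow_zero, one_mul, pow_one]
    unfold Ω c
    rw [F_mul_E]
    have hmain : ((q - q⁻¹) ^ 2)⁻¹ • (q • K q + q⁻¹ • Kinv q)
        - ((q - q⁻¹) ^ 2)⁻¹ • ((q ^ (2 * 0 + 1))⁻¹ • K q + q ^ (2 * 0 + 1) • Kinv q)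
        = (q - q⁻¹)⁻¹ • (K q - Kinv q) := by
      have hK0 : ((q - q⁻¹) ^ 2)⁻¹ * q - ((q - q⁻¹) ^ 2)⁻¹ * q⁻¹ = (q - q⁻¹)⁻¹ := by
        rw [← mul_sub, dd hδ]
      have hKi0 : ((q - q⁻¹) ^ 2)⁻¹ * q⁻¹ - ((q - q⁻¹) ^ 2)⁻¹ * q = -(q - q⁻¹)⁻¹ := by
        rw [← neg_sub, ← mul_sub, dd hδ]
      calc ((q - q⁻¹) ^ 2)⁻¹ • (q • K q + q⁻¹ • Kinv q)
          - ((q - q⁻¹) ^ 2)⁻¹ • ((q ^ (2 * 0 + 1))⁻¹ • K q + q ^ (2 * 0 + 1) • Kinv q)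
          = (((q - q⁻¹) ^ 2)⁻¹ * q - ((q - q⁻¹) ^ 2)⁻¹ * q⁻¹) • K q
            + (((q - q⁻¹) ^ 2)⁻¹ * q⁻¹ - ((q - q⁻¹) ^ 2)⁻¹ * q) • Kinv q := by
            simp only [show 2 * 0 + 1 = 1 from rfl, pow_one, inv_inv]
            module
        _ = (q - q⁻¹)⁻¹ • (K q - Kinv q) := by
            rw [hK0, hKi0]
            module
    rw [add_sub_assoc, hmain]
    abel
  | succ k ih =>
    have hsplit : F q ^ (k + 1) * (Ω q - c q (k + 1))
        = F q * (F q ^ k * (Ω q - c q k)) + F q ^ (k + 1) * (c q k - c q (k + 1)) := by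
      rw [← mul_assoc, ← pow_succ', mul_sub, mul_sub, mul_sub]; abel
    have h2 : F q ^ (k + 1) * (c q k - c q (k + 1))
        = (q - q⁻¹)⁻¹ • ((K q - Kinv q) * F q ^ (k + 1)) := by
      rw [c_sub_c hq0 hδ, mul_smul_comm, sub_mul, mul_sub, mul_smul_comm, mul_smul_comm,
        Fpow_K hq0, Fpow_Kinv, smul_smul, smul_smul, inv_pow,
        inv_mul_cancel₀ (pow_ne_zero _ (pow_ne_zero _ hq0)),
        mul_inv_cancel₀ (pow_ne_zero _ (pow_ne_zero _ hq0)), one_smul, one_smul]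
    rw [hsplit, ih, h2, ← mul_assoc, F_mul_E, sub_mul, smul_mul_assoc, mul_assoc, ← pow_succ']
    abel

end UqAux

open Uq UqAux in
theorem prod_casimir_factors_eq_pow_mul_pow (r : ℕ) (hr : 2 ≤ r)
    (q : ℂ) (hq : q = Complex.exp (Real.pi * Complex.I / r)) (k : ℕ) :
    ((List.range k).map fun i =>
        Ω q - ((q - q⁻¹) ^ 2)⁻¹ •
          ((q ^ (2 * i + 1))⁻¹ • K q + q ^ (2 * i + 1) • Kinv q)).prod
      = E q ^ k * F q ^ k := by
  have hq0 : q ≠ 0 := by rw [hq]; exact Complex.exp_ne_zero _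
  have hδ : q - q⁻¹ ≠ 0 := by
    intro h
    have hq1 : q * q = 1 := by
      have h2 : q = q⁻¹ := sub_eq_zero.mp h
      calc q * q = q * q⁻¹ := by rw [← h2]
        _ = 1 := mul_inv_cancel₀ hq0
    rw [hq, ← Complex.exp_add] at hq1
    obtain ⟨n, hn⟩ := Complex.exp_eq_one_iff.mp hq1
    have hr0 : (r : ℂ) ≠ 0 := Nat.cast_ne_zero.mpr (by omega)
    have hπ : (Real.pi : ℂ) ≠ 0 := Complex.ofReal_ne_zero.mpr Real.pi_ne_zero
    have hI := Complex.I_ne_zero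
    have h2πI : (2 * (Real.pi : ℂ) * Complex.I) ≠ 0 :=
      mul_ne_zero (mul_ne_zero two_ne_zero hπ) hI
    field_simp at hn
    have hmul : (2 * (Real.pi : ℂ) * Complex.I) * ((n : ℂ) * r)
        = (2 * (Real.pi : ℂ) * Complex.I) * 1 := by linear_combination (-(Real.pi : ℂ) * Complex.I) * hn
    have hnr : ((n * r : ℤ) : ℂ) = 1 := by push_cast; exact mul_left_cancel₀ h2πI hmul
    have hnr' : (n * r : ℤ) = 1 := by exact_mod_cast hnr
    have : (r : ℤ) ≤ 1 := Int.le_of_dvd one_pos ⟨n, by linarith⟩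
    omega
  induction k with
  | zero => simp
  | succ k ih =>
    rw [List.range_succ, List.map_append, List.prod_append, ih, List.map_singleton,
      List.prod_singleton]
    have hck : Ω q - ((q - q⁻¹) ^ 2)⁻¹ •
        ((q ^ (2 * k + 1))⁻¹ • K q + q ^ (2 * k + 1) • Kinv q) = Ω q - c q k := rfl
    rw [hck, mul_assoc, key hq0 hδ k, ← mul_assoc, ← pow_succ]
end

section
/- Let r ≥ 2 be an integer and q = exp(iπ/r) ∈ ℂ. Let Ū_q(sl2) be the ℂ-algebra with generators E, F, K, K⁻¹ and relations KK⁻¹ = K⁻¹K = 1, KEK⁻¹ = q²E, KFK⁻¹ = q⁻²F, EF − FE = (K − K⁻¹)/(q − q⁻¹), E^r = 0, F^r = 0, and let Ω := FE + (qK + q⁻¹K⁻¹)/(q − q⁻¹)². Then for every natural number k, the element Ω^k − E^k F^k lies in the ℂ-linear span of {E^j F^j K^i : 0 ≤ j < k, i ∈ ℤ}, where K^i for negative i denotes powers of K⁻¹. -/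
open FreeAlgebra in
/-- Defining relations of `Ū_q(sl2)` (with the nilpotency relations `E^r = F^r = 0`). -/
inductive SL2BarRel (q : ℂ) (r : ℕ) : FreeAlgebra ℂ SL2Gen → FreeAlgebra ℂ SL2Gen → Prop
  | K_Kinv : SL2BarRel q r (ι ℂ SL2Gen.K * ι ℂ SL2Gen.Kinv) 1
  | Kinv_K : SL2BarRel q r (ι ℂ SL2Gen.Kinv * ι ℂ SL2Gen.K) 1
  | K_E : SL2BarRel q r (ι ℂ SL2Gen.K * ι ℂ SL2Gen.E * ι ℂ SL2Gen.Kinv) (q ^ 2 • ι ℂ SL2Gen.E)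
  | K_F : SL2BarRel q r (ι ℂ SL2Gen.K * ι ℂ SL2Gen.F * ι ℂ SL2Gen.Kinv)
      ((q ^ 2)⁻¹ • ι ℂ SL2Gen.F)
  | E_F : SL2BarRel q r (ι ℂ SL2Gen.E * ι ℂ SL2Gen.F - ι ℂ SL2Gen.F * ι ℂ SL2Gen.E)
      ((q - q⁻¹)⁻¹ • (ι ℂ SL2Gen.K - ι ℂ SL2Gen.Kinv))
  | E_pow : SL2BarRel q r (ι ℂ SL2Gen.E ^ r) 0
  | F_pow : SL2BarRel q r (ι ℂ SL2Gen.F ^ r) 0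

/-- `Ū_q(sl2)`. -/
abbrev UqBar (q : ℂ) (r : ℕ) : Type := RingQuot (SL2BarRel q r)

namespace UqBar

variable (q : ℂ) (r : ℕ)

noncomputable def E : UqBar q r := RingQuot.mkAlgHom ℂ (SL2BarRel q r) (FreeAlgebra.ι ℂ SL2Gen.E)
noncomputable def F : UqBar q r := RingQuot.mkAlgHom ℂ (SL2BarRel q r) (FreeAlgebra.ι ℂ SL2Gen.F)
noncomputable def K : UqBar q r := RingQuot.mkAlgHom ℂ (SL2BarRel q r) (FreeAlgebra.ι ℂ SL2Gen.K)
noncomputable def Kinv : UqBar q r :=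
  RingQuot.mkAlgHom ℂ (SL2BarRel q r) (FreeAlgebra.ι ℂ SL2Gen.Kinv)

/-- `K^i` for an integer exponent `i`, using `K⁻¹` for negative `i`. -/
noncomputable def Kz (i : ℤ) : UqBar q r := K q r ^ i.toNat * Kinv q r ^ (-i).toNat

/-- The Casimir element `Ω = FE + (qK + q⁻¹K⁻¹)/(q - q⁻¹)²`. -/
noncomputable def Ω : UqBar q r :=
  F q r * E q r + ((q - q⁻¹) ^ 2)⁻¹ • (q • K q r + q⁻¹ • Kinv q r)

lemma K_mul_Kinv : K q r * Kinv q r = 1 := by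
  have h := RingQuot.mkAlgHom_rel ℂ (SL2BarRel.K_Kinv (q := q) (r := r))
  simpa [K, Kinv, map_mul, map_one] using h

lemma Kinv_mul_K : Kinv q r * K q r = 1 := by
  have h := RingQuot.mkAlgHom_rel ℂ (SL2BarRel.Kinv_K (q := q) (r := r))
  simpa [K, Kinv, map_mul, map_one] using h

lemma K_E_Kinv : K q r * E q r * Kinv q r = q ^ 2 • E q r := by
  have h := RingQuot.mkAlgHom_rel ℂ (SL2BarRel.K_E (q := q) (r := r))
  simpa [K, E, Kinv, map_mul, map_smul] using h

lemma K_F_Kinv : K q r * F q r * Kinv q r = (q ^ 2)⁻¹ • F q r := by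
  have h := RingQuot.mkAlgHom_rel ℂ (SL2BarRel.K_F (q := q) (r := r))
  simpa [K, F, Kinv, map_mul, map_smul] using h

lemma E_F : E q r * F q r
    = F q r * E q r + (q - q⁻¹)⁻¹ • K q r - (q - q⁻¹)⁻¹ • Kinv q r := by
  have h := RingQuot.mkAlgHom_rel ℂ (SL2BarRel.E_F (q := q) (r := r))
  simp only [map_mul, map_sub, map_smul] at h
  rw [show (RingQuot.mkAlgHom ℂ (SL2BarRel q r)) (FreeAlgebra.ι ℂ SL2Gen.E) = E q r from rfl,
    show (RingQuot.mkAlgHom ℂ (SL2BarRel q r)) (FreeAlgebra.ι ℂ SL2Gen.F) = F q r from rfl,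
    show (RingQuot.mkAlgHom ℂ (SL2BarRel q r)) (FreeAlgebra.ι ℂ SL2Gen.K) = K q r from rfl,
    show (RingQuot.mkAlgHom ℂ (SL2BarRel q r)) (FreeAlgebra.ι ℂ SL2Gen.Kinv) = Kinv q r from rfl]
    at h
  have h2 := sub_eq_iff_eq_add.mp h
  rw [h2]; module


lemma K_mul_E : K q r * E q r = q ^ 2 • (E q r * K q r) := by
  have h : K q r * E q r * Kinv q r * K q r = (q ^ 2 • E q r) * K q r := by
    rw [K_E_Kinv]
  rw [mul_assoc, Kinv_mul_K, mul_one, smul_mul_assoc] at h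
  exact h

lemma K_mul_F : K q r * F q r = (q ^ 2)⁻¹ • (F q r * K q r) := by
  have h : K q r * F q r * Kinv q r * K q r = ((q ^ 2)⁻¹ • F q r) * K q r := by
    rw [K_F_Kinv]
  rw [mul_assoc, Kinv_mul_K, mul_one, smul_mul_assoc] at h
  exact h

lemma E_mul_Kinv : E q r * Kinv q r = q ^ 2 • (Kinv q r * E q r) := by
  have h : Kinv q r * (K q r * E q r * Kinv q r) = Kinv q r * (q ^ 2 • E q r) := by
    rw [K_E_Kinv]
  rw [mul_smul_comm, ← mul_assoc, ← mul_assoc, Kinv_mul_K, one_mul] at h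
  exact h

lemma F_mul_Kinv : F q r * Kinv q r = (q ^ 2)⁻¹ • (Kinv q r * F q r) := by
  have h : Kinv q r * (K q r * F q r * Kinv q r) = Kinv q r * ((q ^ 2)⁻¹ • F q r) := by
    rw [K_F_Kinv]
  rw [mul_smul_comm, ← mul_assoc, ← mul_assoc, Kinv_mul_K, one_mul] at h
  exact h

variable {q} in
lemma Kinv_mul_E (hq0 : q ≠ 0) :
    Kinv q r * E q r = (q ^ 2)⁻¹ • (E q r * Kinv q r) := by
  rw [E_mul_Kinv, smul_smul, inv_mul_cancel₀ (pow_ne_zero 2 hq0), one_smul]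

variable {q} in
lemma Kinv_mul_F (hq0 : q ≠ 0) :
    Kinv q r * F q r = q ^ 2 • (F q r * Kinv q r) := by
  rw [F_mul_Kinv, smul_smul, mul_inv_cancel₀ (pow_ne_zero 2 hq0), one_smul]

variable {q} in
lemma E_mul_K (hq0 : q ≠ 0) : E q r * K q r = (q ^ 2)⁻¹ • (K q r * E q r) := by
  rw [K_mul_E, smul_smul, inv_mul_cancel₀ (pow_ne_zero 2 hq0), one_smul]

variable {q} in
lemma F_mul_K (hq0 : q ≠ 0) : F q r * K q r = q ^ 2 • (K q r * F q r) := by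
  rw [K_mul_F, smul_smul, mul_inv_cancel₀ (pow_ne_zero 2 hq0), one_smul]


variable {q} in
lemma E_mul_F_pow (hq0 : q ≠ 0) (m : ℕ) : ∃ a b : ℂ,
    E q r * F q r ^ (m + 1)
      = F q r ^ (m + 1) * E q r + a • (F q r ^ m * K q r)
        + b • (F q r ^ m * Kinv q r) := by
  induction m with
  | zero =>
    refine ⟨(q - q⁻¹)⁻¹, -(q - q⁻¹)⁻¹, ?_⟩
    simp only [zero_add, pow_one, pow_zero, one_mul, E_F]
    module
  | succ m ih =>
    obtain ⟨a, b, ih⟩ := ih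
    refine ⟨(q - q⁻¹)⁻¹ + a * (q ^ 2)⁻¹, -(q - q⁻¹)⁻¹ + b * q ^ 2, ?_⟩
    have h1 : E q r * F q r ^ (m + 2) = (E q r * F q r ^ (m + 1)) * F q r := by
      rw [mul_assoc, ← pow_succ]
    rw [h1, ih, add_mul, add_mul, smul_mul_assoc, smul_mul_assoc, mul_assoc,
      mul_assoc, mul_assoc, E_F, K_mul_F, Kinv_mul_F r hq0]
    simp only [pow_succ, mul_add, mul_sub, add_mul, sub_mul, smul_mul_assoc,
      mul_smul_comm, smul_smul, smul_sub, smul_add, add_smul, mul_assoc]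
    module

variable {q} in
lemma FE_mul_K (hq0 : q ≠ 0) :
    F q r * E q r * K q r = K q r * (F q r * E q r) := by
  have h : K q r * (F q r * E q r) = F q r * E q r * K q r := by
    rw [← mul_assoc, K_mul_F, smul_mul_assoc, mul_assoc, K_mul_E, mul_smul_comm, smul_smul,
      inv_mul_cancel₀ (pow_ne_zero 2 hq0), one_smul, ← mul_assoc]
  exact h.symm

variable {q} in
lemma FE_mul_Kinv (hq0 : q ≠ 0) :
    F q r * E q r * Kinv q r = Kinv q r * (F q r * E q r) := by
  have h : Kinv q r * (F q r * E q r) = F q r * E q r * Kinv q r := by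
    rw [← mul_assoc, Kinv_mul_F r hq0, smul_mul_assoc, mul_assoc, Kinv_mul_E r hq0,
      mul_smul_comm, smul_smul, mul_inv_cancel₀ (pow_ne_zero 2 hq0), one_smul, ← mul_assoc]
  exact h.symm

variable {q} in
lemma Omega_comm_K (hq0 : q ≠ 0) : Commute (Ω q r) (K q r) := by
  show Ω q r * K q r = K q r * Ω q r
  rw [Ω, add_mul, mul_add, FE_mul_K r hq0, smul_mul_assoc, mul_smul_comm,
    add_mul, mul_add, smul_mul_assoc, smul_mul_assoc, mul_smul_comm, mul_smul_comm,
    K_mul_Kinv, Kinv_mul_K]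

variable {q} in
lemma Omega_comm_Kinv (hq0 : q ≠ 0) : Commute (Ω q r) (Kinv q r) := by
  show Ω q r * Kinv q r = Kinv q r * Ω q r
  rw [Ω, add_mul, mul_add, FE_mul_Kinv r hq0, smul_mul_assoc, mul_smul_comm,
    add_mul, mul_add, smul_mul_assoc, smul_mul_assoc, mul_smul_comm, mul_smul_comm,
    K_mul_Kinv, Kinv_mul_K]

variable {q} in
lemma Omega_comm_Kz (hq0 : q ≠ 0) (i : ℤ) : Commute (Ω q r) (Kz q r i) :=
  ((Omega_comm_K r hq0).pow_right _).mul_right ((Omega_comm_Kinv r hq0).pow_right _)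


lemma Kz_one : Kz q r 1 = K q r := by
  simp [Kz]

lemma Kz_neg_one : Kz q r (-1) = Kinv q r := by
  simp [Kz]

lemma K_mul_Kz (i : ℤ) : K q r * Kz q r i = Kz q r (i + 1) := by
  rcases Int.eq_nat_or_neg i with ⟨n, rfl | rfl⟩
  · have h1 : ((n : ℤ)).toNat = n := by omega
    have h2 : ((-(n : ℤ))).toNat = 0 := by omega
    have h3 : (((n : ℤ) + 1)).toNat = n + 1 := by omega
    have h4 : ((-((n : ℤ) + 1))).toNat = 0 := by omega
    simp only [Kz, h1, h2, h3, h4, pow_zero, mul_one, pow_succ']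
  · cases n with
    | zero => simp [Kz]
    | succ m =>
      have h1 : ((-((m : ℤ) + 1))).toNat = 0 := by omega
      have h2 : ((-(-((m : ℤ) + 1)))).toNat = m + 1 := by push_cast; omega
      have h3 : ((-((m : ℤ) + 1) + 1)).toNat = 0 := by omega
      have h4 : ((-(-((m : ℤ) + 1) + 1))).toNat = m := by push_cast; omega
      push_cast
      simp only [Kz, h1, h2, h3, h4, pow_zero, one_mul, pow_succ']
      rw [← mul_assoc, K_mul_Kinv, one_mul]

lemma Kinv_mul_Kz (i : ℤ) : Kinv q r * Kz q r i = Kz q r (i - 1) := by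
  rcases Int.eq_nat_or_neg i with ⟨n, rfl | rfl⟩
  · cases n with
    | zero => simp [Kz]
    | succ m =>
      have h1 : (((m : ℤ) + 1)).toNat = m + 1 := by omega
      have h2 : ((-((m : ℤ) + 1))).toNat = 0 := by omega
      have h3 : (((m : ℤ) + 1 - 1)).toNat = m := by omega
      have h4 : ((-((m : ℤ) + 1 - 1))).toNat = 0 := by omega
      push_cast
      simp only [Kz, h1, h2, h3, h4, pow_zero, mul_one, pow_succ']
      rw [← mul_assoc, Kinv_mul_K, one_mul]
  · have h1 : ((-(n : ℤ))).toNat = 0 := by omega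
    have h2 : ((-(-(n : ℤ)))).toNat = n := by omega
    have h3 : ((-(n : ℤ) - 1)).toNat = 0 := by omega
    have h4 : ((-(-(n : ℤ) - 1))).toNat = n + 1 := by omega
    simp only [Kz, h1, h2, h3, h4, pow_zero, one_mul, pow_succ']

variable {q} in
lemma pow_mul_Omega (hq0 : q ≠ 0) (j : ℕ) : ∃ a b : ℂ,
    E q r ^ j * F q r ^ j * Ω q r
      = E q r ^ (j + 1) * F q r ^ (j + 1)
        + a • (E q r ^ j * F q r ^ j * K q r)
        + b • (E q r ^ j * F q r ^ j * Kinv q r) := by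
  obtain ⟨a, b, h⟩ := E_mul_F_pow r hq0 j
  set c : ℂ := ((q - q⁻¹) ^ 2)⁻¹
  refine ⟨c * q - a, c * q⁻¹ - b, ?_⟩
  have hFE : F q r ^ (j + 1) * E q r
      = E q r * F q r ^ (j + 1) - a • (F q r ^ j * K q r) - b • (F q r ^ j * Kinv q r) := by
    rw [h]; abel
  rw [Ω, mul_add, ← mul_assoc, mul_assoc (E q r ^ j) (F q r ^ j) (F q r), ← pow_succ]
  rw [mul_assoc (E q r ^ j) (F q r ^ (j+1)) (E q r), hFE]
  rw [mul_sub, mul_sub, mul_smul_comm, mul_smul_comm,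
    show E q r ^ j * (E q r * F q r ^ (j + 1)) = E q r ^ (j+1) * F q r ^ (j+1) by
      rw [← mul_assoc, ← pow_succ],
    ← mul_assoc, ← mul_assoc]
  simp only [mul_add, mul_smul_comm, smul_smul, smul_add, sub_smul, mul_assoc]
  module


variable {q} in
lemma gen_mul_Omega (hq0 : q ≠ 0) (j : ℕ) (i : ℤ) : ∃ a b : ℂ,
    (E q r ^ j * F q r ^ j * Kz q r i) * Ω q r
      = E q r ^ (j + 1) * F q r ^ (j + 1) * Kz q r i
        + a • (E q r ^ j * F q r ^ j * Kz q r (i + 1))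
        + b • (E q r ^ j * F q r ^ j * Kz q r (i - 1)) := by
  obtain ⟨a, b, h⟩ := pow_mul_Omega r hq0 j
  refine ⟨a, b, ?_⟩
  rw [mul_assoc, ← (Omega_comm_Kz r hq0 i).eq, ← mul_assoc, h, add_mul, add_mul,
    smul_mul_assoc, smul_mul_assoc, mul_assoc (E q r ^ j * F q r ^ j) (K q r) (Kz q r i),
    K_mul_Kz, mul_assoc (E q r ^ j * F q r ^ j) (Kinv q r) (Kz q r i), Kinv_mul_Kz]

end UqBar

open UqBar in
theorem casimir_pow_sub_pow_mem_span (r : ℕ) (hr : 2 ≤ r)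
    (q : ℂ) (hq : q = Complex.exp (Real.pi * Complex.I / r)) (k : ℕ) :
    Ω q r ^ k - E q r ^ k * F q r ^ k ∈
      Submodule.span ℂ
        {x : UqBar q r | ∃ j : ℕ, j < k ∧ ∃ i : ℤ, x = E q r ^ j * F q r ^ j * Kz q r i} := by
  have hq0 : q ≠ 0 := by rw [hq]; exact Complex.exp_ne_zero _
  induction k with
  | zero => simpa using zero_mem _
  | succ k ih =>
    set S : ℕ → Set (UqBar q r) :=
      fun k => {x : UqBar q r | ∃ j : ℕ, j < k ∧ ∃ i : ℤ, x = E q r ^ j * F q r ^ j * Kz q r i}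
      with hS
    have hmono : Submodule.span ℂ (S k) ≤ Submodule.span ℂ (S (k + 1)) := by
      apply Submodule.span_mono
      rintro x ⟨j, hj, i, rfl⟩
      exact ⟨j, hj.trans (Nat.lt_succ_self k), i, rfl⟩
    have hgen : ∀ j < k + 1, ∀ i : ℤ,
        E q r ^ j * F q r ^ j * Kz q r i ∈ Submodule.span ℂ (S (k + 1)) :=
      fun j hj i => Submodule.subset_span ⟨j, hj, i, rfl⟩
    have key : Ω q r ^ (k + 1) - E q r ^ (k + 1) * F q r ^ (k + 1)
        = (E q r ^ k * F q r ^ k * Ω q r - E q r ^ (k + 1) * F q r ^ (k + 1))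
          + (Ω q r ^ k - E q r ^ k * F q r ^ k) * Ω q r := by
      rw [pow_succ]; noncomm_ring
      simp only [smul_mul_assoc, mul_assoc]
      abel
    rw [key]
    apply Submodule.add_mem
    · obtain ⟨a, b, h⟩ := pow_mul_Omega r hq0 k
      have h2 : E q r ^ k * F q r ^ k * Ω q r - E q r ^ (k + 1) * F q r ^ (k + 1)
          = a • (E q r ^ k * F q r ^ k * Kz q r 1)
            + b • (E q r ^ k * F q r ^ k * Kz q r (-1)) := by
        rw [Kz_one, Kz_neg_one, h]; abel
      rw [h2]
      exact Submodule.add_mem _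
        (Submodule.smul_mem _ _ (hgen k (Nat.lt_succ_self k) 1))
        (Submodule.smul_mem _ _ (hgen k (Nat.lt_succ_self k) (-1)))
    · refine Submodule.span_induction
        (p := fun x _ => x * Ω q r ∈ Submodule.span ℂ (S (k + 1))) ?_ ?_ ?_ ?_ ih
      · rintro x ⟨j, hj, i, rfl⟩
        obtain ⟨a, b, h⟩ := gen_mul_Omega r hq0 j i
        rw [h]
        exact Submodule.add_mem _
          (Submodule.add_mem _ (hgen (j + 1) (Nat.succ_lt_succ hj) i)
            (Submodule.smul_mem _ _ (hgen j (hj.trans (Nat.lt_succ_self k)) (i + 1))))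
          (Submodule.smul_mem _ _ (hgen j (hj.trans (Nat.lt_succ_self k)) (i - 1)))
      · simpa using zero_mem _
      · intro x y _ _ hx hy
        rw [add_mul]; exact Submodule.add_mem _ hx hy
      · intro a x _ hx
        rw [smul_mul_assoc]; exact Submodule.smul_mem _ _ hx
end

section
/- Let r ≥ 2 be an integer, q = exp(iπ/r) ∈ ℂ, α ∈ ℂ, and let U_ᾱ be the ℂ-algebra with generators E, F, K, K⁻¹ and relations KK⁻¹ = K⁻¹K = 1, KEK⁻¹ = q²E, KFK⁻¹ = q⁻²F, EF − FE = (K − K⁻¹)/(q − q⁻¹), E^r = 0, F^r = 0, K^r = exp(iπα)·1. Let Ω := FE + (qK + q⁻¹K⁻¹)/(q − q⁻¹)². Assume the family {E^m F^n K^l : 0 ≤ m, n, l ≤ r−1} is a ℂ-basis of U_ᾱ, let η ∈ ℂ, and let μ̃ : U_ᾱ → ℂ be the linear form determined on this basis by μ̃(E^m F^n K^l) = η if (m, n, l) = (r−1, r−1, 0) and 0 otherwise. Then μ̃(Ω^k) = 0 for every 0 ≤ k ≤ r−2, and μ̃(Ω^{r−1}) = η. -/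
open FreeAlgebra in
/-- Defining relations of `U_ᾱ`: the restricted quantum `sl2` with `K^r = exp(iπα)`. -/
inductive SL2AlphaRel (q : ℂ) (r : ℕ) (α : ℂ) :
    FreeAlgebra ℂ SL2Gen → FreeAlgebra ℂ SL2Gen → Prop
  | K_Kinv : SL2AlphaRel q r α (ι ℂ SL2Gen.K * ι ℂ SL2Gen.Kinv) 1
  | Kinv_K : SL2AlphaRel q r α (ι ℂ SL2Gen.Kinv * ι ℂ SL2Gen.K) 1
  | K_E : SL2AlphaRel q r α (ι ℂ SL2Gen.K * ι ℂ SL2Gen.E * ι ℂ SL2Gen.Kinv)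
      (q ^ 2 • ι ℂ SL2Gen.E)
  | K_F : SL2AlphaRel q r α (ι ℂ SL2Gen.K * ι ℂ SL2Gen.F * ι ℂ SL2Gen.Kinv)
      ((q ^ 2)⁻¹ • ι ℂ SL2Gen.F)
  | E_F : SL2AlphaRel q r α (ι ℂ SL2Gen.E * ι ℂ SL2Gen.F - ι ℂ SL2Gen.F * ι ℂ SL2Gen.E)
      ((q - q⁻¹)⁻¹ • (ι ℂ SL2Gen.K - ι ℂ SL2Gen.Kinv))
  | E_pow : SL2AlphaRel q r α (ι ℂ SL2Gen.E ^ r) 0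
  | F_pow : SL2AlphaRel q r α (ι ℂ SL2Gen.F ^ r) 0
  | K_pow : SL2AlphaRel q r α (ι ℂ SL2Gen.K ^ r)
      (Complex.exp (Real.pi * Complex.I * α) • 1)

/-- The algebra `U_ᾱ`. -/
abbrev UqAlpha (q : ℂ) (r : ℕ) (α : ℂ) : Type := RingQuot (SL2AlphaRel q r α)

namespace UqAlpha

variable (q : ℂ) (r : ℕ) (α : ℂ)

noncomputable def E : UqAlpha q r α :=
  RingQuot.mkAlgHom ℂ (SL2AlphaRel q r α) (FreeAlgebra.ι ℂ SL2Gen.E)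
noncomputable def F : UqAlpha q r α :=
  RingQuot.mkAlgHom ℂ (SL2AlphaRel q r α) (FreeAlgebra.ι ℂ SL2Gen.F)
noncomputable def K : UqAlpha q r α :=
  RingQuot.mkAlgHom ℂ (SL2AlphaRel q r α) (FreeAlgebra.ι ℂ SL2Gen.K)
noncomputable def Kinv : UqAlpha q r α :=
  RingQuot.mkAlgHom ℂ (SL2AlphaRel q r α) (FreeAlgebra.ι ℂ SL2Gen.Kinv)

/-- The Casimir element `Ω = FE + (qK + q⁻¹K⁻¹)/(q - q⁻¹)²`. -/
noncomputable def Ω : UqAlpha q r α :=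
  F q r α * E q r α + ((q - q⁻¹) ^ 2)⁻¹ • (q • K q r α + q⁻¹ • Kinv q r α)

end UqAlpha

namespace UqAlpha

variable (q : ℂ) (r : ℕ) (α : ℂ)

lemma K_mul_Kinv : K q r α * Kinv q r α = 1 := by
  have h := RingQuot.mkAlgHom_rel ℂ (SL2AlphaRel.K_Kinv (q := q) (r := r) (α := α))
  simpa [K, Kinv, map_mul, map_one] using h

lemma Kinv_mul_K : Kinv q r α * K q r α = 1 := by
  have h := RingQuot.mkAlgHom_rel ℂ (SL2AlphaRel.Kinv_K (q := q) (r := r) (α := α))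
  simpa [K, Kinv, map_mul, map_one] using h

lemma K_mul_E : K q r α * E q r α = q ^ 2 • (E q r α * K q r α) := by
  have h := RingQuot.mkAlgHom_rel ℂ (SL2AlphaRel.K_E (q := q) (r := r) (α := α))
  simp only [map_mul, map_smul] at h
  calc K q r α * E q r α
      = (K q r α * E q r α) * (Kinv q r α * K q r α) := by rw [Kinv_mul_K, mul_one]
    _ = (K q r α * E q r α * Kinv q r α) * K q r α := by noncomm_ring
    _ = (q ^ 2 • E q r α) * K q r α := by rw [show K q r α * E q r α * Kinv q r α
          = q ^ 2 • E q r α from h]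
    _ = q ^ 2 • (E q r α * K q r α) := smul_mul_assoc _ _ _

lemma K_mul_F : K q r α * F q r α = (q ^ 2)⁻¹ • (F q r α * K q r α) := by
  have h := RingQuot.mkAlgHom_rel ℂ (SL2AlphaRel.K_F (q := q) (r := r) (α := α))
  simp only [map_mul, map_smul] at h
  calc K q r α * F q r α
      = (K q r α * F q r α) * (Kinv q r α * K q r α) := by rw [Kinv_mul_K, mul_one]
    _ = (K q r α * F q r α * Kinv q r α) * K q r α := by noncomm_ring
    _ = ((q ^ 2)⁻¹ • F q r α) * K q r α := by rw [show K q r α * F q r α * Kinv q r α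
          = (q ^ 2)⁻¹ • F q r α from h]
    _ = (q ^ 2)⁻¹ • (F q r α * K q r α) := smul_mul_assoc _ _ _

lemma E_mul_F : E q r α * F q r α
    = F q r α * E q r α + (q - q⁻¹)⁻¹ • (K q r α - Kinv q r α) := by
  have h := RingQuot.mkAlgHom_rel ℂ (SL2AlphaRel.E_F (q := q) (r := r) (α := α))
  simp only [map_mul, map_smul, map_sub] at h
  rw [E, F, K, Kinv, ← h]
  noncomm_ring

lemma Kpow : K q r α ^ r = Complex.exp (Real.pi * Complex.I * α) • 1 := by
  have h := RingQuot.mkAlgHom_rel ℂ (SL2AlphaRel.K_pow (q := q) (r := r) (α := α))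
  simpa [K, map_pow, map_smul, map_one] using h


lemma F_mul_Kinv (hq : q ≠ 0) :
    Kinv q r α * F q r α = q ^ 2 • (F q r α * Kinv q r α) := by
  have h : F q r α * Kinv q r α = (q ^ 2)⁻¹ • (Kinv q r α * F q r α) := by
    calc F q r α * Kinv q r α
        = (Kinv q r α * K q r α) * F q r α * Kinv q r α := by rw [Kinv_mul_K, one_mul]
      _ = Kinv q r α * (K q r α * F q r α) * Kinv q r α := by noncomm_ring
      _ = Kinv q r α * ((q ^ 2)⁻¹ • (F q r α * K q r α)) * Kinv q r α := by rw [K_mul_F]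
      _ = (q ^ 2)⁻¹ • (Kinv q r α * F q r α * (K q r α * Kinv q r α)) := by
            simp only [mul_smul_comm, smul_mul_assoc]; noncomm_ring
      _ = (q ^ 2)⁻¹ • (Kinv q r α * F q r α) := by rw [K_mul_Kinv, mul_one]
  rw [h, smul_smul, mul_inv_cancel₀ (pow_ne_zero 2 hq), one_smul]

lemma Kpow_mul_E (l : ℕ) :
    K q r α ^ l * E q r α = (q ^ 2) ^ l • (E q r α * K q r α ^ l) := by
  induction l with
  | zero => simp
  | succ n ih =>
      calc K q r α ^ (n + 1) * E q r α
          = K q r α ^ n * (K q r α * E q r α) := by rw [pow_succ]; noncomm_ring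
        _ = K q r α ^ n * (q ^ 2 • (E q r α * K q r α)) := by rw [K_mul_E]
        _ = q ^ 2 • (K q r α ^ n * E q r α * K q r α) := by
              simp only [mul_smul_comm]; noncomm_ring
        _ = q ^ 2 • ((q ^ 2) ^ n • (E q r α * K q r α ^ n) * K q r α) := by rw [ih]
        _ = (q ^ 2) ^ (n + 1) • (E q r α * K q r α ^ (n + 1)) := by
              rw [smul_mul_assoc, smul_smul, ← pow_succ', mul_assoc, ← pow_succ]

lemma Kpow_mul_F (l : ℕ) :
    K q r α ^ l * F q r α = ((q ^ 2)⁻¹) ^ l • (F q r α * K q r α ^ l) := by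
  induction l with
  | zero => simp
  | succ n ih =>
      calc K q r α ^ (n + 1) * F q r α
          = K q r α ^ n * (K q r α * F q r α) := by rw [pow_succ]; noncomm_ring
        _ = K q r α ^ n * ((q ^ 2)⁻¹ • (F q r α * K q r α)) := by rw [K_mul_F]
        _ = (q ^ 2)⁻¹ • (K q r α ^ n * F q r α * K q r α) := by
              simp only [mul_smul_comm]; noncomm_ring
        _ = (q ^ 2)⁻¹ • (((q ^ 2)⁻¹) ^ n • (F q r α * K q r α ^ n) * K q r α) := by rw [ih]
        _ = ((q ^ 2)⁻¹) ^ (n + 1) • (F q r α * K q r α ^ (n + 1)) := by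
              rw [smul_mul_assoc, smul_smul, ← pow_succ', mul_assoc, ← pow_succ]

lemma Kinv_eq (hr : 1 ≤ r) :
    Kinv q r α = (Complex.exp (Real.pi * Complex.I * α))⁻¹ • K q r α ^ (r - 1) := by
  have e0 : Complex.exp (Real.pi * Complex.I * α) ≠ 0 := Complex.exp_ne_zero _
  have h1 : K q r α ^ (r - 1) * K q r α = Complex.exp (Real.pi * Complex.I * α) • 1 := by
    rw [← pow_succ, Nat.sub_add_cancel hr, Kpow]
  have h2 : K q r α ^ (r - 1)
      = Complex.exp (Real.pi * Complex.I * α) • Kinv q r α := by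
    calc K q r α ^ (r - 1)
        = K q r α ^ (r - 1) * (K q r α * Kinv q r α) := by rw [K_mul_Kinv, mul_one]
      _ = (K q r α ^ (r - 1) * K q r α) * Kinv q r α := by noncomm_ring
      _ = (Complex.exp (Real.pi * Complex.I * α) • (1 : UqAlpha q r α)) * Kinv q r α := by
            rw [h1]
      _ = Complex.exp (Real.pi * Complex.I * α) • Kinv q r α := by
            rw [smul_mul_assoc, one_mul]
  rw [h2, smul_smul, inv_mul_cancel₀ e0, one_smul]

lemma E_mul_Fpow (hq : q ≠ 0) (n : ℕ) :
    ∃ a b : ℂ, E q r α * F q r α ^ (n + 1)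
      = F q r α ^ (n + 1) * E q r α + a • (F q r α ^ n * K q r α)
        + b • (F q r α ^ n * Kinv q r α) := by
  induction n with
  | zero =>
      refine ⟨(q - q⁻¹)⁻¹, -(q - q⁻¹)⁻¹, ?_⟩
      simp only [zero_add, pow_one, pow_zero, one_mul, E_mul_F, smul_sub]
      module
  | succ n ih =>
      obtain ⟨a, b, hab⟩ := ih
      refine ⟨a * (q ^ 2)⁻¹ + (q - q⁻¹)⁻¹, b * q ^ 2 - (q - q⁻¹)⁻¹, ?_⟩
      calc E q r α * F q r α ^ (n + 2)
          = (E q r α * F q r α ^ (n + 1)) * F q r α := by rw [pow_succ]; noncomm_ring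
        _ = (F q r α ^ (n + 1) * E q r α + a • (F q r α ^ n * K q r α)
              + b • (F q r α ^ n * Kinv q r α)) * F q r α := by rw [hab]
        _ = F q r α ^ (n + 1) * (E q r α * F q r α)
              + a • (F q r α ^ n * (K q r α * F q r α))
              + b • (F q r α ^ n * (Kinv q r α * F q r α)) := by
            simp only [add_mul, smul_mul_assoc]; noncomm_ring
        _ = F q r α ^ (n + 1) * (F q r α * E q r α
                + (q - q⁻¹)⁻¹ • (K q r α - Kinv q r α))
              + a • (F q r α ^ n * ((q ^ 2)⁻¹ • (F q r α * K q r α)))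
              + b • (F q r α ^ n * (q ^ 2 • (F q r α * Kinv q r α))) := by
            rw [E_mul_F, K_mul_F, F_mul_Kinv q r α hq]
        _ = F q r α ^ (n + 2) * E q r α
              + (a * (q ^ 2)⁻¹ + (q - q⁻¹)⁻¹) • (F q r α ^ (n + 1) * K q r α)
              + (b * q ^ 2 - (q - q⁻¹)⁻¹) • (F q r α ^ (n + 1) * Kinv q r α) := by
            simp only [mul_add, mul_sub, mul_smul_comm, smul_sub, smul_smul, add_smul, sub_smul,
              pow_succ, mul_assoc]
            module


lemma Kpow_mul_FE (hq : q ≠ 0) (l : ℕ) :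
    K q r α ^ l * (F q r α * E q r α) = F q r α * E q r α * K q r α ^ l := by
  calc K q r α ^ l * (F q r α * E q r α)
      = (K q r α ^ l * F q r α) * E q r α := (mul_assoc _ _ _).symm
    _ = (((q ^ 2)⁻¹) ^ l • (F q r α * K q r α ^ l)) * E q r α := by rw [Kpow_mul_F]
    _ = ((q ^ 2)⁻¹) ^ l • (F q r α * (K q r α ^ l * E q r α)) := by
          rw [smul_mul_assoc, mul_assoc]
    _ = ((q ^ 2)⁻¹) ^ l • (F q r α * ((q ^ 2) ^ l • (E q r α * K q r α ^ l))) := by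
          rw [Kpow_mul_E]
    _ = (((q ^ 2)⁻¹) ^ l * (q ^ 2) ^ l) • (F q r α * (E q r α * K q r α ^ l)) := by
          rw [mul_smul_comm, smul_smul]
    _ = F q r α * E q r α * K q r α ^ l := by
          rw [← mul_pow, inv_mul_cancel₀ (pow_ne_zero 2 hq), one_pow, one_smul, mul_assoc]

lemma Kpow_Kinv (hr : 1 ≤ r) (l : ℕ) : ∃ c : ℂ,
    K q r α ^ l * Kinv q r α = c • K q r α ^ (if l = 0 then r - 1 else l - 1)
    ∧ Kinv q r α * K q r α ^ l = c • K q r α ^ (if l = 0 then r - 1 else l - 1) := by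
  cases l with
  | zero =>
      refine ⟨(Complex.exp (Real.pi * Complex.I * α))⁻¹, ?_, ?_⟩ <;>
        simp [Kinv_eq q r α hr]
  | succ n =>
      refine ⟨1, ?_, ?_⟩ <;>
        simp only [if_neg (Nat.succ_ne_zero n), Nat.add_sub_cancel, one_smul]
      · rw [pow_succ, mul_assoc, K_mul_Kinv, mul_one]
      · rw [pow_succ', ← mul_assoc, Kinv_mul_K, one_mul]

lemma key (hq : q ≠ 0) (hr : 1 ≤ r) (a l : ℕ) :
    ∃ c1 c2 : ℂ,
      E q r α ^ a * F q r α ^ a * K q r α ^ l * Ω q r α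
        = E q r α ^ (a + 1) * F q r α ^ (a + 1) * K q r α ^ l
          + c1 • (E q r α ^ a * F q r α ^ a * K q r α ^ (if l + 1 = r then 0 else l + 1))
          + c2 • (E q r α ^ a * F q r α ^ a * K q r α ^ (if l = 0 then r - 1 else l - 1)) := by
  obtain ⟨a', b', hab⟩ := E_mul_Fpow q r α hq a
  have hFE : F q r α ^ (a + 1) * E q r α
      = E q r α * F q r α ^ (a + 1) - a' • (F q r α ^ a * K q r α)
        - b' • (F q r α ^ a * Kinv q r α) := by
    rw [hab]; abel
  obtain ⟨cm, hcm1, hcm2⟩ := Kpow_Kinv q r α hr l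
  have hcp : ∃ c : ℂ, K q r α ^ (l + 1) = c • K q r α ^ (if l + 1 = r then 0 else l + 1) := by
    by_cases h : l + 1 = r
    · exact ⟨Complex.exp (Real.pi * Complex.I * α), by rw [if_pos h, h, Kpow, pow_zero]⟩
    · exact ⟨1, by rw [if_neg h, one_smul]⟩
  obtain ⟨cp, hcp⟩ := hcp
  have hKc : K q r α * K q r α ^ l = K q r α ^ l * K q r α := by
    rw [← pow_succ', pow_succ]
  have hKic : Kinv q r α * K q r α ^ l = K q r α ^ l * Kinv q r α := by rw [hcm1, hcm2]
  set d : ℂ := ((q - q⁻¹) ^ 2)⁻¹ with hd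
  refine ⟨(d * q - a') * cp, (d * q⁻¹ - b') * cm, ?_⟩
  calc E q r α ^ a * F q r α ^ a * K q r α ^ l * Ω q r α
      = E q r α ^ a * F q r α ^ a * (K q r α ^ l * (F q r α * E q r α))
        + (d * q) • (E q r α ^ a * F q r α ^ a * (K q r α ^ l * K q r α))
        + (d * q⁻¹) • (E q r α ^ a * F q r α ^ a * (K q r α ^ l * Kinv q r α)) := by
        rw [Ω]
        simp only [mul_add, smul_add, mul_smul_comm, smul_smul, mul_assoc]
        rw [hd]
        abel
    _ = E q r α ^ a * ((F q r α ^ (a + 1) * E q r α) * K q r α ^ l)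
        + (d * q) • (E q r α ^ a * F q r α ^ a * (K q r α ^ l * K q r α))
        + (d * q⁻¹) • (E q r α ^ a * F q r α ^ a * (K q r α ^ l * Kinv q r α)) := by
        rw [Kpow_mul_FE q r α hq l]
        simp only [pow_succ, mul_assoc]
    _ = E q r α ^ (a + 1) * F q r α ^ (a + 1) * K q r α ^ l
        + (d * q - a') • (E q r α ^ a * F q r α ^ a * (K q r α ^ l * K q r α))
        + (d * q⁻¹ - b') • (E q r α ^ a * F q r α ^ a * (K q r α ^ l * Kinv q r α)) := by
        rw [hFE]
        simp only [sub_mul, smul_mul_assoc, mul_sub, mul_smul_comm, sub_smul, smul_smul,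
          hKc, hKic, pow_succ, mul_assoc, smul_sub, mul_add, add_mul, smul_add]
        module
    _ = E q r α ^ (a + 1) * F q r α ^ (a + 1) * K q r α ^ l
        + ((d * q - a') * cp) • (E q r α ^ a * F q r α ^ a
            * K q r α ^ (if l + 1 = r then 0 else l + 1))
        + ((d * q⁻¹ - b') * cm) • (E q r α ^ a * F q r α ^ a
            * K q r α ^ (if l = 0 then r - 1 else l - 1)) := by
        rw [show K q r α ^ l * K q r α
            = cp • K q r α ^ (if l + 1 = r then 0 else l + 1) from by rw [← pow_succ, hcp],
          hcm1]
        simp only [mul_smul_comm, smul_smul, mul_assoc]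


/-- Generating set: `E^a F^a K^l` with `a ≤ k`, `l < r`, and not the top term. -/
def good (q : ℂ) (r : ℕ) (α : ℂ) (k : ℕ) : Set (UqAlpha q r α) :=
  {x | ∃ a l : ℕ, a ≤ k ∧ l < r ∧ (a < k ∨ 0 < l)
    ∧ x = E q r α ^ a * F q r α ^ a * K q r α ^ l}

lemma omega_pow_mem (hq : q ≠ 0) (hr : 2 ≤ r) (k : ℕ) :
    Ω q r α ^ k - E q r α ^ k * F q r α ^ k ∈ Submodule.span ℂ (good q r α k) := by
  have hr1 : 1 ≤ r := le_trans one_le_two hr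
  induction k with
  | zero => simp
  | succ k ih =>
      have hmul : Submodule.span ℂ (good q r α k) ≤
          Submodule.comap (LinearMap.mulRight ℂ (Ω q r α))
            (Submodule.span ℂ (good q r α (k + 1))) := by
        refine Submodule.span_le.2 ?_
        rintro x ⟨a, l, ha, hl, hcond, rfl⟩
        obtain ⟨c1, c2, hkey⟩ := key q r α hq hr1 a l
        simp only [SetLike.mem_coe, Submodule.mem_comap, LinearMap.mulRight_apply, hkey]
        refine Submodule.add_mem _ (Submodule.add_mem _ ?_ ?_) ?_
        · exact Submodule.subset_span ⟨a + 1, l, Nat.succ_le_succ ha, hl,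
            hcond.imp (fun h => Nat.succ_lt_succ h) id, rfl⟩
        · refine Submodule.smul_mem _ _ (Submodule.subset_span ⟨a, _, le_trans ha (Nat.le_succ k),
            ?_, Or.inl (Nat.lt_succ_of_le ha), rfl⟩)
          split
          · omega
          · omega
        · refine Submodule.smul_mem _ _ (Submodule.subset_span ⟨a, _, le_trans ha (Nat.le_succ k),
            ?_, Or.inl (Nat.lt_succ_of_le ha), rfl⟩)
          split
          · omega
          · omega
      obtain ⟨c1, c2, hkey⟩ := key q r α hq hr1 k 0
      simp only [pow_zero, mul_one, zero_add, if_neg (by omega : ¬ 1 = r), if_true] at hkey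
      have hsum : Ω q r α ^ (k + 1) - E q r α ^ (k + 1) * F q r α ^ (k + 1)
          = (Ω q r α ^ k - E q r α ^ k * F q r α ^ k) * Ω q r α
            + (c1 • (E q r α ^ k * F q r α ^ k * K q r α ^ 1)
              + c2 • (E q r α ^ k * F q r α ^ k * K q r α ^ (r - 1))) := by
        rw [pow_succ, sub_mul, hkey]
        module
      rw [hsum]
      refine Submodule.add_mem _ (hmul ih) (Submodule.add_mem _ ?_ ?_)
      · exact Submodule.smul_mem _ _ (Submodule.subset_span
          ⟨k, 1, Nat.le_succ k, by omega, Or.inl (Nat.lt_succ_self k), rfl⟩)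
      · exact Submodule.smul_mem _ _ (Submodule.subset_span
          ⟨k, r - 1, Nat.le_succ k, by omega, Or.inl (Nat.lt_succ_self k), rfl⟩)

end UqAlpha

open UqAlpha in
theorem symmetrised_integral_casimir_powers (r : ℕ) (hr : 2 ≤ r)
    (q : ℂ) (hq : q = Complex.exp (Real.pi * Complex.I / r)) (α : ℂ)
    (b : Module.Basis (Fin r × Fin r × Fin r) ℂ (UqAlpha q r α))
    (hb : ∀ p : Fin r × Fin r × Fin r,
      b p = E q r α ^ (p.1 : ℕ) * F q r α ^ (p.2.1 : ℕ) * K q r α ^ (p.2.2 : ℕ))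
    (η : ℂ) (μ : UqAlpha q r α →ₗ[ℂ] ℂ)
    (hμ : ∀ m n l : Fin r,
      μ (E q r α ^ (m : ℕ) * F q r α ^ (n : ℕ) * K q r α ^ (l : ℕ))
        = if (m : ℕ) = r - 1 ∧ (n : ℕ) = r - 1 ∧ (l : ℕ) = 0 then η else 0) :
    (∀ k : ℕ, k ≤ r - 2 → μ (Ω q r α ^ k) = 0) ∧ μ (Ω q r α ^ (r - 1)) = η := by
  have hq0 : q ≠ 0 := by rw [hq]; exact Complex.exp_ne_zero _
  have main : ∀ k : ℕ, k < r → μ (Ω q r α ^ k) = (if k = r - 1 then η else 0) := by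
    intro k hk
    have hmem := omega_pow_mem q r α hq0 hr k
    have hker : Submodule.span ℂ (good q r α k) ≤ LinearMap.ker μ := by
      refine Submodule.span_le.2 ?_
      rintro x ⟨a, l, ha, hl, hcond, rfl⟩
      simp only [SetLike.mem_coe, LinearMap.mem_ker]
      have h := hμ ⟨a, lt_of_le_of_lt ha hk⟩ ⟨a, lt_of_le_of_lt ha hk⟩ ⟨l, hl⟩
      simp only [Fin.val_mk] at h
      rw [h, if_neg (by omega)]
    have h1 : μ (Ω q r α ^ k - E q r α ^ k * F q r α ^ k) = 0 := hker hmem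
    have h2 := hμ ⟨k, hk⟩ ⟨k, hk⟩ ⟨0, by omega⟩
    simp only [Fin.val_mk, pow_zero, mul_one] at h2
    have h3 : μ (Ω q r α ^ k) = μ (E q r α ^ k * F q r α ^ k)
        + μ (Ω q r α ^ k - E q r α ^ k * F q r α ^ k) := by
      rw [← map_add, add_sub_cancel]
    rw [h3, h1, add_zero, h2]
    by_cases hk1 : k = r - 1 <;> simp [hk1]
  refine ⟨fun k hk => ?_, ?_⟩
  · rw [main k (by omega), if_neg (by omega)]
  · rw [main (r - 1) (by omega), if_pos rfl]
end
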